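/- For a connected bipartite vertex set S of G and two distinct child generators u < v of S (in the vertex ordering), the family of connected bipartite supersets of S ∪ {u} contained in G(S, ≥u) is disjoint from the family of connected bipartite supersets of S ∪ {v} contained in G(S, ≥v). -/
import Mathlib


variable {V : Type*}

def IsBipartition (G : SimpleGraph V) (L R : Set V) : Prop :=
  (∀ v, v ∈ L ∨ v ∈ R) ∧ (∀ v, ¬(v ∈ L ∧ v ∈ R)) ∧
    ∀ u v, G.Adj u v → (u ∈ L ∧ v ∈ R) ∨ (u ∈ R ∧ v ∈ L)

def IsBip (G : SimpleGraph V) : Prop := ∃ L R : Set V, IsBipartition G L R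

/-- `S` is a connected bipartite vertex set of `G`. -/
def CBVS (G : SimpleGraph V) (S : Set V) : Prop :=
  (G.induce S).Connected ∧ IsBip (G.induce S)

/-- The set `C(S, G)` of child generators of `S`:
vertices `w ∉ S` such that `S ∪ {w}` is a connected bipartite vertex set. -/
def CSet (G : SimpleGraph V) (S : Set V) : Set V :=
  {w | w ∉ S ∧ CBVS G (S ∪ {w})}

/-- The vertex set of `G(S, ≥ u)`: `G` with all child generators of `S` smaller than `u`
deleted. -/
def Gge [LinearOrder V] (G : SimpleGraph V) (S : Set V) (u : V) : Set V :=
  {x | ¬ (x ∈ CSet G S ∧ x < u)}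

/-- `𝒮(G[A], T)`: connected bipartite vertex sets of the induced subgraph `G[A]`
containing `T`, viewed as subsets of `V`. -/
def Sol (G : SimpleGraph V) (A T : Set V) : Set (Set V) :=
  {S' | S' ⊆ A ∧ T ⊆ S' ∧ CBVS G S'}

/-- For distinct child generators `u < v` of a connected bipartite vertex set `S`, the
family of connected bipartite supersets of `S ∪ {u}` inside `G(S, ≥u)` is disjoint from
the family of connected bipartite supersets of `S ∪ {v}` inside `G(S, ≥v)`. -/
theorem stmt_5 [Fintype V] [LinearOrder V] (G : SimpleGraph V) (S : Set V)
    (hS : CBVS G S) (u v : V) (hu : u ∈ CSet G S) (hv : v ∈ CSet G S) (huv : u < v) :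
    Sol G (Gge G S u) (S ∪ {u}) ∩ Sol G (Gge G S v) (S ∪ {v}) = ∅ := by
  ext S'
  simp only [Set.mem_inter_iff, Set.mem_empty_iff_false, iff_false]
  rintro ⟨⟨_, h1, _⟩, h2, _, _⟩
  have hu' : u ∈ S' := h1 (Set.mem_union_right _ rfl)
  exact (h2 hu') ⟨hu, huv⟩
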